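/- Fix r₁ ≥ 1, m_a > 0, T ≥ 1, and set k′ = k·m_a, so that under the token-conservation constraint m_e = k′·u where u = 1/r₂. Then the scheduling cost (the denominator of the throughput objective, i.e., the minimization objective of Eq. 17), viewed as the function of u given by u ↦ (T − 1)·max(G(u), r₁·F(u)) + max(X(m_a), G(u)) + (1/u − 1)·Ŷ(u) + (r₁ − 1)·F(u), where Ŷ(u) = max(t_e(k′·u), t_{a2e}(k′·u)), F(u) = max(X(m_a), (1/u)·Ŷ(u)), and G(u) = t_a(m_a) + 2·t_{a2e}(k′·u) + t_e(k′·u) + (1/u − 1)·Ŷ(u), is a convex function of u on the interval (0, 1]. -/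

import Mathlib

open Set

private lemma convexOn_affine (s : Set ℝ) (hs : Convex ℝ s) (a b : ℝ) :
    ConvexOn ℝ s (fun u => a + b * u) := by
  refine ⟨hs, fun x _ y _ p q hp hq hpq => le_of_eq ?_⟩
  simp only [smul_eq_mul]
  linear_combination (-a) * hpq

private lemma convexOn_one_div_Ioc :
    ConvexOn ℝ (Set.Ioc (0:ℝ) 1) (fun u => 1 / u) := by
  have h := (strictConvexOn_zpow (m := -1) (by decide) (by decide)).convexOn
  have h2 := h.subset (Ioc_subset_Ioi_self) (convex_Ioc 0 1)
  refine h2.congr fun x hx => ?_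
  simp [zpow_neg, one_div]

/-- `a/u + b*u + c` with `a ≥ 0` is convex on `(0,1]`. -/
private lemma convexOn_hyper (a b c : ℝ) (ha : 0 ≤ a) :
    ConvexOn ℝ (Set.Ioc (0:ℝ) 1) (fun u => a * (1 / u) + (c + b * u)) := by
  have h1 := convexOn_one_div_Ioc.smul ha
  have h2 := convexOn_affine (Set.Ioc (0:ℝ) 1) (convex_Ioc 0 1) c b
  have := h1.add h2
  refine this.congr fun u _ => ?_
  simp [smul_eq_mul]

theorem stmt_3
    (αa βa αs βs αe βe αc βc k : ℝ)
    (hαa : 0 < αa) (hβa : 0 < βa) (hαs : 0 < αs) (hβs : 0 < βs)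
    (hαe : 0 < αe) (hβe : 0 < βe) (hαc : 0 < αc) (hβc : 0 < βc)
    (hk : 0 < k) (T : ℕ) (hT : 1 ≤ T)
    (ta ts te ta2e : ℝ → ℝ)
    (hta : ∀ m, ta m = αa + βa * m)
    (hts : ∀ m, ts m = αs + βs * m)
    (hte : ∀ m, te m = αe + βe * m)
    (hta2e : ∀ m, ta2e m = αc + βc * m)
    (r₁ ma : ℝ) (hr₁ : 1 ≤ r₁) (hma : 0 < ma)
    (k' : ℝ) (hk' : k' = k * ma)
    (X : ℝ) (hX : X = ta ma + ts ma)
    (Yh F G : ℝ → ℝ)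
    (hYh : ∀ u, Yh u = max (te (k' * u)) (ta2e (k' * u)))
    (hF : ∀ u, F u = max X ((1 / u) * Yh u))
    (hG : ∀ u, G u = ta ma + 2 * ta2e (k' * u) + te (k' * u) + (1 / u - 1) * Yh u) :
    ConvexOn ℝ (Set.Ioc (0 : ℝ) 1) (fun u =>
      ((T : ℝ) - 1) * max (G u) (r₁ * F u) + max X (G u)
        + (1 / u - 1) * Yh u + (r₁ - 1) * F u) := by
  set s : Set ℝ := Set.Ioc (0:ℝ) 1 with hs
  have hsc : Convex ℝ s := convex_Ioc 0 1
  -- Explicit convex models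
  -- W u = (1/u - 1) * Yh u  on s
  set W : ℝ → ℝ := fun u =>
    max (αe * (1/u) + ((βe * k' - αe) + (-(βe * k')) * u))
        (αc * (1/u) + ((βc * k' - αc) + (-(βc * k')) * u)) with hWdef
  have hWconv : ConvexOn ℝ s W :=
    (convexOn_hyper αe (-(βe * k')) (βe * k' - αe) hαe.le).sup
      (convexOn_hyper αc (-(βc * k')) (βc * k' - αc) hαc.le)
  have hWeq : ∀ u ∈ s, W u = (1 / u - 1) * Yh u := by
    intro u hu
    have hu0 : (0:ℝ) < u := hu.1
    have hu1 : u ≤ 1 := hu.2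
    have hnn : 0 ≤ 1 / u - 1 := by
      rw [sub_nonneg, le_div_iff₀ hu0]; linarith
    have hne : u ≠ 0 := hu0.ne'
    have e1 : αe * (1/u) + ((βe * k' - αe) + (-(βe * k')) * u)
        = (1/u - 1) * (αe + βe * (k' * u)) := by field_simp; ring
    have e2 : αc * (1/u) + ((βc * k' - αc) + (-(βc * k')) * u)
        = (1/u - 1) * (αc + βc * (k' * u)) := by field_simp; ring
    rw [hYh, hte, hta2e, mul_max_of_nonneg _ _ hnn, ← e1, ← e2]
  -- Z u = (1/u) * Yh u on s
  set Z : ℝ → ℝ := fun u =>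
    max (αe * (1/u) + (βe * k' + 0 * u)) (αc * (1/u) + (βc * k' + 0 * u)) with hZdef
  have hZconv : ConvexOn ℝ s Z :=
    (convexOn_hyper αe 0 (βe * k') hαe.le).sup (convexOn_hyper αc 0 (βc * k') hαc.le)
  have hZeq : ∀ u ∈ s, Z u = (1 / u) * Yh u := by
    intro u hu
    have hu0 : (0:ℝ) < u := hu.1
    have hnn : (0:ℝ) ≤ 1 / u := by positivity
    have hne : u ≠ 0 := hu0.ne'
    have e1 : αe * (1/u) + (βe * k' + 0 * u)
        = (1/u) * (αe + βe * (k' * u)) := by field_simp; ring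
    have e2 : αc * (1/u) + (βc * k' + 0 * u)
        = (1/u) * (αc + βc * (k' * u)) := by field_simp; ring
    rw [hYh, hte, hta2e, mul_max_of_nonneg _ _ hnn, ← e1, ← e2]
  -- F' = F on s
  set F' : ℝ → ℝ := fun u => max X (Z u) with hF'def
  have hF'conv : ConvexOn ℝ s F' := (convexOn_const X hsc).sup hZconv
  have hF'eq : ∀ u ∈ s, F' u = F u := by
    intro u hu; rw [hF]; simp only [hF'def]; rw [hZeq u hu]
  -- G' = G on s
  set G' : ℝ → ℝ := fun u =>
    ((ta ma + 2 * αc + αe) + (2 * βc * k' + βe * k') * u) + W u with hG'def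
  have hG'conv : ConvexOn ℝ s G' :=
    (convexOn_affine s hsc _ _).add hWconv
  have hG'eq : ∀ u ∈ s, G' u = G u := by
    intro u hu
    rw [hG, hte, hta2e]
    simp only [hG'def]
    rw [hWeq u hu]; ring
  -- assemble
  have hT1 : (0:ℝ) ≤ (T:ℝ) - 1 := by
    have : (1:ℝ) ≤ (T:ℝ) := by exact_mod_cast hT
    linarith
  have hr0 : (0:ℝ) ≤ r₁ := by linarith
  have hr1 : (0:ℝ) ≤ r₁ - 1 := by linarith
  have c1 : ConvexOn ℝ s (fun u => ((T:ℝ) - 1) * max (G' u) (r₁ * F' u)) := by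
    have := ((hG'conv.sup (hF'conv.smul hr0)).smul hT1)
    simpa [smul_eq_mul] using this
  have c2 : ConvexOn ℝ s (fun u => max X (G' u)) := (convexOn_const X hsc).sup hG'conv
  have c4 : ConvexOn ℝ s (fun u => (r₁ - 1) * F' u) := by
    have := hF'conv.smul hr1
    simpa [smul_eq_mul] using this
  have hall : ConvexOn ℝ s (fun u =>
      ((T:ℝ) - 1) * max (G' u) (r₁ * F' u) + max X (G' u) + W u + (r₁ - 1) * F' u) :=
    ((c1.add c2).add hWconv).add c4
  refine hall.congr fun u hu => ?_
  dsimp only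
  rw [hF'eq u hu, hG'eq u hu, hWeq u hu]
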